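/- Let L be a nonempty set and let C₁ be a general consequence operator on L (not necessarily finite). Let RI*₁ be the logic-system defined from C₁ by: R¹ = C₁(∅); for each nonempty finite X ⊆ L with |X| = n and enumeration X = {x₁,…,xₙ}, R^{n+1}_X(C₁) = {(x₁,…,xₙ,y) : y ∈ C₁(X) − (X ∪ R¹)} if C₁(X) ≠ X ∪ R¹ and ∅ otherwise, with R^{n+1}_F(C₁) the union of these over all finite X of cardinality n; and RI*₁ = {R¹} ∪ {R^{n+1}_F(C₁) : n ≥ 1}. Then for every X ⊆ L and every RI*₁-deduction b₁,…,bₙ from X, each b_i ∈ C₁(X). Consequently, the operator C*₁ generated by RI*₁ satisfies C*₁(X) ⊆ C₁(X) for all X ⊆ L. -/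
import Mathlib


/-!
A general logic-system `RI` on a language `L` is encoded as a set of nonempty
lists over `L`: a list `[a₁, …, aₙ]` with `n ≥ 2` is an `n`-ary rule allowing the
deduction of `aₙ` once `a₁, …, a_{n-1}` have been obtained, and a singleton
`[a]` records that `a` is a member of a unary relation, i.e. an axiom.
(A collection of `n`-ary relations `Rⁿ ⊆ Lⁿ` is identified with the set of all
its tuples, encoded as lists.)
-/

/-- `bs = [b₁, …, b_m]` is an `RI`-deduction from `X`: each step `b_j` is in `X`,
or is an axiom (member of a unary relation of `RI`), or is the last coordinate
of a tuple `(a₁, …, aₙ) ∈ RI` whose first `n-1` coordinates all lie in `X`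
together with the axioms and the previous steps `b₁, …, b_{j-1}`. -/
def IsDeduction {L : Type*} (RI : Set (List L)) (X : Set L) (bs : List L) : Prop :=
  ∀ j : Fin bs.length,
    bs.get j ∈ X ∨ [bs.get j] ∈ RI ∨
      ∃ l : List L, l ≠ [] ∧ l ++ [bs.get j] ∈ RI ∧
        ∀ b ∈ l, b ∈ X ∨ [b] ∈ RI ∨ b ∈ bs.take j.1

/-- The operator generated by the logic-system `RI`: it sends `X ⊆ L` to the set
of all elements of `L` deducible from `X` by a finite-step `RI`-deduction. -/
def genOp {L : Type*} (RI : Set (List L)) (X : Set L) : Set L :=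
  {a | ∃ bs : List L, IsDeduction RI X bs ∧ a ∈ bs}

/-- The logic-system `RI*` defined from an operator `C`: its unary relation is
`R¹ = C(∅)`, and for each nonempty finite `X ⊆ L` with `|X| = n` and each
enumeration `X = {x₁, …, xₙ}` (a nodup list `xs`), it contains the
`(n+1)`-tuples `(x₁, …, xₙ, y)` for `y ∈ C(X) − (X ∪ R¹)` (so when
`C(X) = X ∪ R¹` no tuple arises from `X`, i.e. the relation is `∅` there). -/
def RIstar {L : Type*} (C : Set L → Set L) : Set (List L) :=
  {l | ∃ a ∈ C ∅, l = [a]} ∪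
    {l | ∃ (xs : List L) (y : L), xs ≠ [] ∧ xs.Nodup ∧
      y ∈ C {x | x ∈ xs} \ ({x | x ∈ xs} ∪ C ∅) ∧ l = xs ++ [y]}

/-- If `C₁` is a general (not necessarily finite) consequence operator and
`RI*₁` is the logic-system defined from `C₁`, then every step of every
`RI*₁`-deduction from `X` lies in `C₁(X)`; consequently the generated operator
`C*₁` satisfies `C*₁(X) ⊆ C₁(X)` for all `X`. -/
theorem stmt7 {L : Type*} [Nonempty L] (C₁ : Set L → Set L)
    (h_incl : ∀ X : Set L, X ⊆ C₁ X)
    (h_idem : ∀ X : Set L, C₁ (C₁ X) = C₁ X)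
    (h_mono : ∀ X Y : Set L, X ⊆ Y → C₁ X ⊆ C₁ Y) :
    (∀ (X : Set L) (bs : List L), IsDeduction (RIstar C₁) X bs → ∀ b ∈ bs, b ∈ C₁ X) ∧
    (∀ X : Set L, genOp (RIstar C₁) X ⊆ C₁ X) := by
  have hax : ∀ (X : Set L) (b : L), [b] ∈ RIstar C₁ → b ∈ C₁ X := by
    intro X b hb
    rcases hb with ⟨a, ha, heq⟩ | ⟨xs, y, hxs, _, _, heq⟩
    · rw [List.cons.injEq] at heq
      rw [heq.1]
      exact h_mono ∅ X (Set.empty_subset X) ha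
    · exfalso
      have := congrArg List.length heq
      simp at this
      exact hxs this
  have key : ∀ (X : Set L) (bs : List L), IsDeduction (RIstar C₁) X bs →
      ∀ b ∈ bs, b ∈ C₁ X := by
    intro X bs hded
    have main : ∀ n, ∀ j : Fin bs.length, j.1 = n → bs.get j ∈ C₁ X := by
      intro n
      induction n using Nat.strong_induction_on with
      | _ n ih =>
        intro j hj
        rcases hded j with h | h | ⟨l, hl, hmem, hall⟩
        · exact h_incl X h
        · exact hax X _ h
        · rcases hmem with ⟨a, ha, heq⟩ | ⟨xs, y, hxs, hnd, hy, heq⟩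
          · exfalso
            have := congrArg List.length heq
            simp at this
            exact hl this
          · obtain ⟨rfl, heq2⟩ := List.append_inj' heq rfl
            rw [List.cons.injEq] at heq2
            rw [heq2.1]
            have hsub : {x | x ∈ l} ⊆ C₁ X := by
              intro x hx
              rcases hall x hx with h | h | h
              · exact h_incl X h
              · exact hax X x h
              · rw [List.mem_take_iff_getElem] at h
                obtain ⟨i, hi, rfl⟩ := h
                have hij : i < n := hj ▸ lt_of_lt_of_le hi (min_le_left _ _)
                have hil : i < bs.length := lt_of_lt_of_le hi (min_le_right _ _)
                exact ih i hij ⟨i, hil⟩ rfl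
            have := h_mono _ _ hsub hy.1
            rw [h_idem] at this
            exact this
    intro b hb
    rw [List.mem_iff_get] at hb
    obtain ⟨j, rfl⟩ := hb
    exact main j.1 j rfl
  refine ⟨key, ?_⟩
  intro X a ⟨bs, hded, hb⟩
  exact key X bs hded a hb
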